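/- In the general reduction graph G, if S is a feasible bootstrap solution containing a blue vertex w_i^{(v)} (an auxiliary vertex introduced for v ∈ V_H), then (S \ {w_i^{(v)}}) ∪ {v} is also a feasible bootstrap solution. -/

import Mathlib

/-- Colors of vertices in the circuit DAG. -/
inductive Color where
  | white | blue | red
deriving DecidableEq

/-- Number of red vertices on a path (given as a list of vertices). -/
def redCount {V : Type*} (color : V → Color) (p : List V) : ℕ :=
  (p.filter (fun v => decide (color v = Color.red))).length

/-- `p` is an interesting path: it starts and ends at red vertices and traverses exactly
`L+1` red vertices. -/
def IntPath {V : Type*} (E : V → V → Prop) (color : V → Color) (L : ℕ) (p : List V) : Prop :=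
  ∃ hp : p ≠ [], p.Chain' E ∧ color (p.head hp) = Color.red ∧
    color (p.getLast hp) = Color.red ∧ redCount color p = L + 1

variable {α : Type*} [Fintype α] [DecidableEq α]

/-- Indegree of a vertex of `H`. -/
def windeg (EH : α → α → Prop) [DecidableRel EH] (v : α) : ℕ :=
  (Finset.univ.filter (fun u => EH u v)).card

/-- Vertex set of the general reduction graph `G`: original vertices `V_H`
(`.inl (.inl v)`, red), clones `V_H'` (`.inl (.inr v)`, red), the white source `s₀`
(`.inr (.inl ())`), and the auxiliary blue chain vertices `w_i^{(v)}`
(`.inr (.inr ⟨v, i⟩)`, used when `indegree(v) ≥ 3`). -/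
abbrev GVt (α : Type*) [Fintype α] [DecidableEq α]
    (EH : α → α → Prop) [DecidableRel EH] :=
  (α ⊕ α) ⊕ (Unit ⊕ (Σ v : α, Fin (windeg EH v)))

/-- Colors in the general reduction graph. -/
def gcolor (EH : α → α → Prop) [DecidableRel EH] : GVt α EH → Color
  | .inl _ => Color.red
  | .inr (.inl _) => Color.white
  | .inr (.inr _) => Color.blue

/-- Edges of the general reduction graph `G` built from `H` using, for each `v`, an
enumeration `ord v` of the predecessors of `v`: edges of `H` going into vertices of indegree
at most 2, edges `v → v'` to the clones, edges `s₀ → v` for indegree at most 1, and, for each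
`v` of indegree `d ≥ 3`, the blue chain `w₀^{(v)} → ⋯ → w_{d-1}^{(v)} → v` together with the
edges `(ord v i) → w_i^{(v)}` (parallel multiplicities are irrelevant for paths). -/
def GE (EH : α → α → Prop) [DecidableRel EH]
    (ord : ∀ v : α, Fin (windeg EH v) ≃ {u : α // EH u v}) :
    GVt α EH → GVt α EH → Prop
  | .inl (.inl u), .inl (.inl v) => EH u v ∧ windeg EH v ≤ 2
  | .inl (.inl u), .inl (.inr v) => u = v
  | .inr (.inl _), .inl (.inl v) => windeg EH v ≤ 1
  | .inl (.inl u), .inr (.inr ⟨v, i⟩) => 3 ≤ windeg EH v ∧ ((ord v i : {u : α // EH u v}) : α) = u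
  | .inr (.inr ⟨v, i⟩), .inr (.inr ⟨v', j⟩) =>
      3 ≤ windeg EH v ∧ v = v' ∧ (i : ℕ) + 1 = (j : ℕ)
  | .inr (.inr ⟨v, i⟩), .inl (.inl v') =>
      3 ≤ windeg EH v ∧ v = v' ∧ (i : ℕ) + 1 = windeg EH v
  | _, _ => False

lemma getElem_idx_congr {β : Type*} {l : List β} {i j : ℕ} (h : i = j) (hi : i < l.length) :
    l[i]'hi = l[j]'(h ▸ hi) := by subst h; rfl

section helpers

variable (EH : α → α → Prop) [DecidableRel EH]
    (ord : ∀ v : α, Fin (windeg EH v) ≃ {u : α // EH u v}) (v : α)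

/-- Forward forcing: from a blue chain vertex of `v` in a path ending red, the path is
forced through blue chain vertices of `v` until it reaches `v`. -/
lemma fwd_run (p : List (GVt α EH)) (hc : p.Chain' (GE EH ord)) (hp : p ≠ [])
    (hlast : gcolor EH (p.getLast hp) = Color.red) :
    ∀ k (hk : k < p.length) (j : Fin (windeg EH v)),
      p[k]'hk = Sum.inr (Sum.inr ⟨v, j⟩) →
      ∃ m, k < m ∧ ∃ hm : m < p.length, p[m]'hm = Sum.inl (Sum.inl v) ∧
        ∀ l (hl : l < p.length), k ≤ l → l < m →
          ∃ j' : Fin (windeg EH v), p[l]'hl = Sum.inr (Sum.inr ⟨v, j'⟩) := by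
  have key : ∀ n k (hk : k < p.length) (j : Fin (windeg EH v)), p.length - k ≤ n →
      p[k]'hk = Sum.inr (Sum.inr ⟨v, j⟩) →
      ∃ m, k < m ∧ ∃ hm : m < p.length, p[m]'hm = Sum.inl (Sum.inl v) ∧
        ∀ l (hl : l < p.length), k ≤ l → l < m →
          ∃ j' : Fin (windeg EH v), p[l]'hl = Sum.inr (Sum.inr ⟨v, j'⟩) := by
    intro n
    induction n with
    | zero => intro k hk j hn; omega
    | succ n IH =>
      intro k hk j hn hkj
      have hklast : k ≠ p.length - 1 := by
        intro h
        have := hlast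
        rw [List.getLast_eq_getElem] at this
        have : gcolor EH (p[k]'hk) = Color.red := by
          subst h; exact this
        rw [hkj] at this
        simp [gcolor] at this
      have hk1 : k + 1 < p.length := by omega
      have e := (List.isChain_iff_getElem.mp hc) k (by omega)
      rw [hkj] at e
      rcases hy : p[k + 1]'hk1 with (u | u) | (u | ⟨v', j'⟩) <;> rw [hy] at e
      · -- next is an original vertex: must be v
        obtain ⟨-, rfl, -⟩ := e
        refine ⟨k + 1, by omega, hk1, hy, ?_⟩
        intro l hl h1 h2
        have : l = k := by omega
        subst this
        exact ⟨j, hkj⟩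
      · exact e.elim
      · exact e.elim
      · -- next is the successor chain vertex
        obtain ⟨-, rfl, -⟩ := e
        obtain ⟨m, hm1, hm2, hm3, hint⟩ := IH (k + 1) hk1 j' (by omega) hy
        refine ⟨m, by omega, hm2, hm3, ?_⟩
        intro l hl h1 h2
        rcases eq_or_lt_of_le h1 with rfl | h1'
        · exact ⟨j, hkj⟩
        · exact hint l hl (by omega) h2
  intro k hk j hkj
  exact key (p.length - k) k hk j le_rfl hkj

/-- Backward forcing: before a blue chain vertex of `v` in a path starting red, the path
runs back through blue chain vertices of `v` to a red original vertex. -/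
lemma bwd_run (p : List (GVt α EH)) (hc : p.Chain' (GE EH ord)) (hp : p ≠ [])
    (hhead : gcolor EH (p.head hp) = Color.red) :
    ∀ k (hk : k < p.length) (j : Fin (windeg EH v)),
      p[k]'hk = Sum.inr (Sum.inr ⟨v, j⟩) →
      ∃ k0, k0 < k ∧ (∃ (hk0 : k0 < p.length) (u : α), p[k0]'hk0 = Sum.inl (Sum.inl u)) ∧
        ∀ l (hl : l < p.length), k0 < l → l ≤ k →
          ∃ j' : Fin (windeg EH v), p[l]'hl = Sum.inr (Sum.inr ⟨v, j'⟩) := by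
  intro k
  induction k using Nat.strong_induction_on with
  | _ k IH =>
    intro hk j hkj
    have hk0 : k ≠ 0 := by
      intro h
      have := hhead
      rw [List.head_eq_getElem] at this
      have : gcolor EH (p[k]'hk) = Color.red := by subst h; exact this
      rw [hkj] at this
      simp [gcolor] at this
    obtain ⟨k', rfl⟩ := Nat.exists_eq_succ_of_ne_zero hk0
    have hk' : k' < p.length := by omega
    have e := (List.isChain_iff_getElem.mp hc) k' (by omega)
    rw [hkj] at e
    rcases hy : p[k']'hk' with (u | u) | (u | ⟨v'', j''⟩) <;> rw [hy] at e
    · -- previous is an original vertex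
      refine ⟨k', by omega, ⟨hk', u, hy⟩, ?_⟩
      intro l hl h1 h2
      have : l = k' + 1 := by omega
      subst this
      exact ⟨j, hkj⟩
    · exact e.elim
    · exact e.elim
    · -- previous is the preceding chain vertex
      obtain ⟨-, rfl, -⟩ := e
      obtain ⟨k0, h1, h2, hint⟩ := IH k' (by omega) hk' j'' hy
      refine ⟨k0, by omega, h2, ?_⟩
      intro l hl hl1 hl2
      rcases eq_or_lt_of_le hl2 with rfl | hl2'
      · exact ⟨j, hkj⟩
      · exact hint l hl hl1 (by omega)

end helpers

/-- Proposition 1 of the paper: in the general reduction graph `G`, if a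
feasible bootstrap solution `S` contains a blue auxiliary vertex `w_i^{(v)}`, then
`(S \ {w_i^{(v)}}) ∪ {v}` is also a feasible bootstrap solution. -/
theorem stmt14 (EH : α → α → Prop) [DecidableRel EH]
    (hdag : WellFounded EH) (L : ℕ) (hL : 2 ≤ L)
    (ord : ∀ v : α, Fin (windeg EH v) ≃ {u : α // EH u v})
    (S : Set (GVt α EH))
    (hfeas : ∀ p : List (GVt α EH), IntPath (GE EH ord) (gcolor EH) L p →
      ∃ z ∈ p.dropLast, z ∈ S)
    (v : α) (i : Fin (windeg EH v))
    (hw : (Sum.inr (Sum.inr ⟨v, i⟩) : GVt α EH) ∈ S) :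
    ∀ p : List (GVt α EH), IntPath (GE EH ord) (gcolor EH) L p →
      ∃ z ∈ p.dropLast,
        z ∈ (S \ {(Sum.inr (Sum.inr ⟨v, i⟩) : GVt α EH)}) ∪
            {(Sum.inl (Sum.inl v) : GVt α EH)} := by
  intro p hip
  obtain ⟨z, hz, hzS⟩ := hfeas p hip
  by_cases hzw : z = (Sum.inr (Sum.inr ⟨v, i⟩) : GVt α EH)
  swap
  · exact ⟨z, hz, Or.inl ⟨hzS, hzw⟩⟩
  subst hzw
  obtain ⟨hp, hc, hhead, hlast, hcount⟩ := hip
  -- locate the blue vertex in p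
  obtain ⟨k, hk, hke⟩ := List.mem_iff_getElem.mp hz
  rw [List.length_dropLast] at hk
  have hkp : k < p.length := by omega
  rw [List.getElem_dropLast] at hke
  obtain ⟨m, hkm, hm, hmv, hfint⟩ := fwd_run EH ord v p hc hp hlast k hkp i hke
  by_cases hmn : m < p.length - 1
  · -- v occurs as a non-final vertex of p
    refine ⟨Sum.inl (Sum.inl v), ?_, Or.inr rfl⟩
    exact List.mem_iff_getElem.mpr ⟨m, by rw [List.length_dropLast]; omega,
      by rw [List.getElem_dropLast]; exact hmv⟩
  · -- v is the final vertex of p; build an auxiliary interesting path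
    have hm1 : m = p.length - 1 := by omega
    subst hm1
    obtain ⟨k0, hk0k, ⟨hk0p, u, hk0u⟩, hbint⟩ := bwd_run EH ord v p hc hp hhead k hkp i hke
    have hk01 : k0 + 1 ≤ p.length := by omega
    set P : List (GVt α EH) := p.take (k0 + 1) with hP
    have hPlen : P.length = k0 + 1 := by simp [hP]; omega
    have hPne : P ≠ [] := by
      intro h; rw [h] at hPlen; simp at hPlen
    have hPget : ∀ l (hl : l < k0 + 1), P[l]'(by omega) = p[l]'(by omega) := by
      intro l hl
      simp [hP]
    have hPlast : P.getLast hPne = Sum.inl (Sum.inl u) := by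
      rw [List.getLast_eq_getElem]
      rw [getElem_idx_congr (show P.length - 1 = k0 by omega)]
      rw [hPget k0 (by omega)]
      exact hk0u
    -- all interior vertices of `drop (k0+1) p` are blue
    have hblue : ∀ l (hl : l < p.length), k0 < l → l < p.length - 1 →
        gcolor EH (p[l]'hl) = Color.blue := by
      intro l hl h1 h2
      by_cases hlk : l ≤ k
      · obtain ⟨j', hj'⟩ := hbint l hl h1 hlk
        rw [hj']; rfl
      · obtain ⟨j', hj'⟩ := hfint l hl (by omega) (by omega)
        rw [hj']; rfl
    have hqint : IntPath (GE EH ord) (gcolor EH) L (P ++ [Sum.inl (Sum.inr u)]) := by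
      have hqne : (P ++ [Sum.inl (Sum.inr u)] : List (GVt α EH)) ≠ [] := by simp
      refine ⟨hqne, ?_, ?_, ?_, ?_⟩
      · -- chain
        refine List.IsChain.append (List.IsChain.take hc _) (List.isChain_singleton _) ?_
        intro x hx y hy
        simp only [List.head?_cons, Option.mem_def, Option.some.injEq] at hy
        rw [List.getLast?_eq_getLast hPne, Option.mem_def, Option.some.injEq] at hx
        have hx' : x = Sum.inl (Sum.inl u) := hx.symm.trans hPlast
        subst hy
        rw [hx']
        show u = u
        rfl
      · -- head is red
        have h0 : (0 : ℕ) < P.length := by omega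
        rw [List.head_eq_getElem, List.getElem_append_left h0, hPget 0 (by omega),
          ← List.head_eq_getElem hp]
        exact hhead
      · -- last is red
        rw [List.getLast_concat]
        rfl
      · -- red count
        have hsplit : P ++ p.drop (k0 + 1) = p := List.take_append_drop _ _
        have hcnt_add : ∀ (A B : List (GVt α EH)),
            redCount (gcolor EH) (A ++ B) = redCount (gcolor EH) A + redCount (gcolor EH) B := by
          intro A B
          simp [redCount, List.filter_append]
        set D : List (GVt α EH) := p.drop (k0 + 1) with hD
        have hDlen : D.length = p.length - (k0 + 1) := by simp [hD]
        have hDne : D ≠ [] := by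
          intro h; rw [h] at hDlen; simp at hDlen; omega
        have hDsplit : D.dropLast ++ [D.getLast hDne] = D := List.dropLast_append_getLast hDne
        have hDdrop_blue : ∀ x ∈ D.dropLast, gcolor EH x = Color.blue := by
          intro x hx
          obtain ⟨t, ht, hte⟩ := List.mem_iff_getElem.mp hx
          rw [List.length_dropLast, hDlen] at ht
          rw [List.getElem_dropLast] at hte
          have htp : k0 + 1 + t < p.length := by omega
          have : D[t]'(by rw [hDlen]; omega) = p[k0 + 1 + t]'htp := by
            simp [hD]
          rw [this] at hte
          rw [← hte]
          exact hblue (k0 + 1 + t) htp (by omega) (by omega)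
        have hDlast : D.getLast hDne = Sum.inl (Sum.inl v) := by
          rw [List.getLast_eq_getElem]
          have h1 : D.length - 1 < D.length := by omega
          have : D[D.length - 1]'h1 = p[k0 + 1 + (D.length - 1)]'(by omega) := by
            simp [hD]
          rw [this]
          have : k0 + 1 + (D.length - 1) = p.length - 1 := by omega
          rw [getElem_idx_congr this]
          exact hmv
        have hDcnt : redCount (gcolor EH) D = 1 := by
          rw [← hDsplit, hcnt_add]
          have h0 : redCount (gcolor EH) D.dropLast = 0 := by
            simp only [redCount, List.length_eq_zero_iff]
            rw [List.filter_eq_nil_iff]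
            intro a ha
            have := hDdrop_blue a ha
            simp [this]
          rw [h0, hDlast]
          simp [redCount, gcolor]
        have hPcnt : redCount (gcolor EH) P = L := by
          have := hcount
          rw [← hsplit, hcnt_add, hDcnt] at this
          omega
        rw [hcnt_add, hPcnt]
        simp [redCount, gcolor]
    obtain ⟨z', hz', hz'S⟩ := hfeas _ hqint
    rw [List.dropLast_concat] at hz'
    obtain ⟨l, hl, hle⟩ := List.mem_iff_getElem.mp hz'
    rw [hPlen] at hl
    have hlp : l < p.length := by omega
    have hle' : p[l]'hlp = z' := by rw [← hle]; exact (hPget l hl).symm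
    have hlfin : l < p.length - 1 := by omega
    by_cases hz'w : z' = (Sum.inr (Sum.inr ⟨v, i⟩) : GVt α EH)
    · -- the solution vertex found is again the blue vertex: v occurs before k0
      subst hz'w
      obtain ⟨m', hlm', hm'p, hm'v, hint'⟩ := fwd_run EH ord v p hc hp hlast l hlp i hle'
      have hm'k0 : m' ≤ k0 := by
        by_contra h
        push_neg at h
        obtain ⟨j', hj'⟩ := hint' k0 hk0p (by omega) (by omega)
        rw [hk0u] at hj'
        simp at hj'
      refine ⟨Sum.inl (Sum.inl v), ?_, Or.inr rfl⟩
      exact List.mem_iff_getElem.mpr ⟨m', by rw [List.length_dropLast]; omega,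
        by rw [List.getElem_dropLast]; exact hm'v⟩
    · refine ⟨z', ?_, Or.inl ⟨hz'S, hz'w⟩⟩
      exact List.mem_iff_getElem.mpr ⟨l, by rw [List.length_dropLast]; omega,
        by rw [List.getElem_dropLast]; exact hle'⟩
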